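/- (Theorem 1.5(b).) There exist an open neighborhood M ⊆ ℝ⁴ of the origin, a real-analytic vector field V : M → ℝ⁴, an open set Ω ⊆ ℝ² and a real-analytic map φ = (φ₁, φ₂) : Ω → ℝ² with X := {(x, y, φ₁(x,y), φ₂(x,y)) : (x,y) ∈ Ω} ⊆ M (so X is a non-singular two-dimensional analytic submanifold of M), such that: (i) the triple (M, V, X) is geometrically quasi-transverse: for every q ∈ X with V(q) ≠ 0 there exist an open neighborhood W ⊆ M of q and a real-analytic f : W → ℝ such that X ∩ W ⊆ f⁻¹(0) and (fderiv f q)(V(q)) ≠ 0; and (ii) the generalized Flow-Box property fails: there exists a compact set K ⊆ X such that for every δ > 0 there exist a point p ∈ K with V(p) ≠ 0, a time t with 0 < t < δ, and an integral curve γ : [0, t] → M of V with γ(0) = p and γ(t) ∈ X. -/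

import Mathlib

noncomputable section

/-- The vector field `V(x,y,z,w) = (-y, x, y, x³ - y²)`. -/
def Vf : (Fin 4 → ℝ) → (Fin 4 → ℝ) := fun q => ![-(q 1), q 0, q 1, (q 0)^3 - (q 1)^2]

/-- The explicit integral curve of `Vf` through `(r cos(t/2), -r sin(t/2), 0, 0)`. -/
def gam (t r : ℝ) : ℝ → (Fin 4 → ℝ) := fun s =>
  ![r * Real.cos (s - t/2),
    r * Real.sin (s - t/2),
    r * (Real.cos (t/2) - Real.cos (s - t/2)),
    r^3 * (Real.sin (s - t/2) - Real.sin (s - t/2)^3/3 + (Real.sin (t/2) - Real.sin (t/2)^3/3))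
      - r^2 * ((s - t/2)/2 - Real.sin (2*s - t)/4 + (t/4 - Real.sin t/4))]

lemma gam_hasDerivAt (t r s : ℝ) : HasDerivAt (gam t r) (Vf (gam t r s)) s := by
  apply hasDerivAt_pi.2
  intro i
  fin_cases i
  · have h := (((hasDerivAt_id s).sub_const (t/2)).cos).const_mul r
    simp only [id_eq] at h
    simp [gam, Vf]
    refine h.congr_deriv (Eq.symm ?_)
    ring
  · have h := (((hasDerivAt_id s).sub_const (t/2)).sin).const_mul r
    simp only [id_eq] at h
    simp [gam, Vf]
    refine h.congr_deriv (Eq.symm ?_)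
    ring
  · have h := ((hasDerivAt_const s (Real.cos (t/2))).sub
      (((hasDerivAt_id s).sub_const (t/2)).cos)).const_mul r
    simp only [id_eq] at h
    simp [gam, Vf]
    refine h.congr_deriv (Eq.symm ?_)
    ring
  · have h1 : HasDerivAt (fun x : ℝ => Real.sin (x - t/2)) (Real.cos (s - t/2) * 1) s :=
      ((hasDerivAt_id s).sub_const (t/2)).sin
    have h2 := h1.pow 3
    have hA := ((h1.sub (h2.div_const 3)).add_const
      (Real.sin (t/2) - Real.sin (t/2)^3/3)).const_mul (r^3)
    have hB1 := ((hasDerivAt_id s).sub_const (t/2)).div_const 2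
    have hB2 := ((((hasDerivAt_id s).const_mul 2).sub_const t).sin).div_const 4
    have hB := ((hB1.sub hB2).add_const (t/4 - Real.sin t/4)).const_mul (r^2)
    have h := hA.sub hB
    simp only [id_eq] at h
    simp [gam, Vf]
    refine h.congr_deriv (Eq.symm ?_)
    rw [show 2*s - t = 2*(s - t/2) by ring, Real.cos_two_mul]
    push_cast
    have hpy := Real.sin_sq_add_cos_sq (s - t/2)
    linear_combination (r^3 * Real.cos (s - t/2) - r^2) * hpy

lemma gam_zero (t r : ℝ) :
    gam t r 0 = ![r * Real.cos (t/2), -(r * Real.sin (t/2)), 0, 0] := by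
  funext i
  fin_cases i <;>
    simp [gam, zero_sub, mul_zero, Real.sin_neg, Real.cos_neg] <;> ring

lemma gam_end (t r : ℝ)
    (h : r * (Real.sin (t/2) - Real.sin (t/2)^3/3) = t/4 - Real.sin t/4) :
    gam t r t = ![r * Real.cos (t/2), r * Real.sin (t/2), 0, 0] := by
  funext i
  fin_cases i <;> simp [gam, show t - t/2 = t/2 by ring]
  rw [show (2:ℝ)*t - t = t by ring]
  linear_combination (2*r^2) * h

/-- **Theorem 1.5(b).** There is a geometrically quasi-transverse triple `(M, V, X)` in
dimension `4`, with `X` a non-singular two-dimensional analytic graph, which does not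
satisfy the generalized Flow-Box property. -/
theorem exists_quasi_transverse_without_flow_box :
    ∃ (M : Set (Fin 4 → ℝ)) (V : (Fin 4 → ℝ) → (Fin 4 → ℝ))
      (Ω : Set (ℝ × ℝ)) (φ₁ φ₂ : ℝ × ℝ → ℝ) (X : Set (Fin 4 → ℝ)),
      IsOpen M ∧ (0 : Fin 4 → ℝ) ∈ M ∧
      AnalyticOnNhd ℝ V M ∧
      IsOpen Ω ∧
      AnalyticOnNhd ℝ φ₁ Ω ∧ AnalyticOnNhd ℝ φ₂ Ω ∧
      X = (fun p : ℝ × ℝ => ![p.1, p.2, φ₁ p, φ₂ p]) '' Ω ∧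
      X ⊆ M ∧
      -- (i) geometric quasi-transversality
      (∀ q ∈ X, V q ≠ 0 → ∃ (W : Set (Fin 4 → ℝ)) (f : (Fin 4 → ℝ) → ℝ),
        IsOpen W ∧ q ∈ W ∧ W ⊆ M ∧ AnalyticOnNhd ℝ f W ∧
        (X ∩ W ⊆ f ⁻¹' {0}) ∧ fderiv ℝ f q (V q) ≠ 0) ∧
      -- (ii) failure of the generalized Flow-Box property
      (∃ K : Set (Fin 4 → ℝ), K ⊆ X ∧ IsCompact K ∧
        ∀ δ > (0 : ℝ), ∃ p ∈ K, V p ≠ 0 ∧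
          ∃ t : ℝ, 0 < t ∧ t < δ ∧
            ∃ γ : ℝ → (Fin 4 → ℝ),
              γ 0 = p ∧
              (∀ s ∈ Set.Icc 0 t, γ s ∈ M) ∧
              (∀ s ∈ Set.Icc 0 t, HasDerivWithinAt γ (V (γ s)) (Set.Icc 0 t) s) ∧
              γ t ∈ X) := by
  have hproj : ∀ (i : Fin 4),
      AnalyticOnNhd ℝ (fun q : Fin 4 → ℝ => q i) (Set.univ : Set (Fin 4 → ℝ)) := fun i =>
    (ContinuousLinearMap.proj i : (Fin 4 → ℝ) →L[ℝ] ℝ).analyticOnNhd _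
  refine ⟨Set.univ, Vf, Set.univ, fun _ => 0, fun _ => 0,
    (fun p : ℝ × ℝ => ![p.1, p.2, (0:ℝ), (0:ℝ)]) '' Set.univ,
    isOpen_univ, trivial, ?_, isOpen_univ, analyticOnNhd_const, analyticOnNhd_const, rfl,
    Set.subset_univ _, ?_, ?_⟩
  · -- analyticity of Vf
    exact AnalyticOnNhd.pi (f := fun i (q : Fin 4 → ℝ) => Vf q i) fun i => by
      fin_cases i
      · exact ((hproj 1).neg).congr isOpen_univ (fun x _ => by simp [Vf])
      · exact (hproj 0).congr isOpen_univ (fun x _ => by simp [Vf])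
      · exact (hproj 1).congr isOpen_univ (fun x _ => by simp [Vf])
      · exact (((hproj 0).pow 3).sub ((hproj 1).pow 2)).congr isOpen_univ
          (fun x _ => by simp [Vf])
  · -- quasi-transversality
    rintro q ⟨p, -, rfl⟩ hVq
    have hab : ¬ (p.1 = 0 ∧ p.2 = 0) := by
      rintro ⟨ha, hb⟩
      apply hVq
      funext i
      fin_cases i <;> simp [Vf, ha, hb]
    refine ⟨Set.univ, fun v => p.2 * v 2 + (p.1^3 - p.2^2) * v 3, isOpen_univ, trivial,
      Set.subset_univ _, ?_, ?_, ?_⟩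
    · exact (analyticOnNhd_const.mul (hproj 2)).add (analyticOnNhd_const.mul (hproj 3))
    · rintro v ⟨⟨p', -, rfl⟩, -⟩
      simp
    · have hfL : (fun v : Fin 4 → ℝ => p.2 * v 2 + (p.1^3 - p.2^2) * v 3) =
        ⇑(p.2 • (ContinuousLinearMap.proj 2 : (Fin 4 → ℝ) →L[ℝ] ℝ)
          + (p.1^3 - p.2^2) • (ContinuousLinearMap.proj 3 : (Fin 4 → ℝ) →L[ℝ] ℝ)) := by
        funext v
        simp [smul_eq_mul]
      rw [hfL, ContinuousLinearMap.fderiv]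
      have hval : (p.2 • (ContinuousLinearMap.proj 2 : (Fin 4 → ℝ) →L[ℝ] ℝ)
          + (p.1^3 - p.2^2) • (ContinuousLinearMap.proj 3 : (Fin 4 → ℝ) →L[ℝ] ℝ))
          (Vf ![p.1, p.2, 0, 0]) = p.2 * p.2 + (p.1^3 - p.2^2) * (p.1^3 - p.2^2) := by
        simp [Vf, smul_eq_mul]
      rw [hval]
      intro hzero
      have hb2 : p.2 * p.2 = 0 :=
        le_antisymm (by nlinarith [mul_self_nonneg (p.1^3 - p.2^2)]) (mul_self_nonneg _)
      have hb : p.2 = 0 := mul_self_eq_zero.mp hb2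
      have hc : p.1^3 - p.2^2 = 0 := mul_self_eq_zero.mp (by linarith)
      have ha : p.1 = 0 := by
        have h3 : p.1^3 = 0 := by rw [hb] at hc; simpa using hc
        exact (pow_eq_zero_iff (by norm_num)).mp h3
      exact hab ⟨ha, hb⟩
  · -- failure of the flow-box property
    refine ⟨(fun p : ℝ × ℝ => ![p.1, p.2, (0:ℝ), (0:ℝ)]) '' Metric.closedBall 0 1,
      Set.image_mono (Set.subset_univ _), ?_, ?_⟩
    · apply (isCompact_closedBall (0 : ℝ × ℝ) 1).image
      apply continuous_pi
      intro i
      fin_cases i <;> simp <;> fun_prop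
    · intro δ hδ
      have hpi : (3:ℝ) < Real.pi := Real.pi_gt_three
      set t := min δ 1 / 2 with ht_def
      have htδ1 : min δ 1 ≤ δ := min_le_left _ _
      have htδ2 : min δ 1 ≤ 1 := min_le_right _ _
      have htpos0 : 0 < min δ 1 := lt_min hδ one_pos
      have ht0 : 0 < t := by rw [ht_def]; positivity
      have ht1 : t ≤ 1/2 := by rw [ht_def]; linarith
      have htδ : t < δ := by rw [ht_def]; linarith
      have hs2pos : 0 < Real.sin (t/2) :=
        Real.sin_pos_of_pos_of_lt_pi (by linarith) (by linarith)
      have hs2le : Real.sin (t/2) ≤ 1 := Real.sin_le_one _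
      have hst : Real.sin t < t := Real.sin_lt ht0
      have hstc : t - t^3/4 < Real.sin t := by
        have := Real.sin_gt_sub_cube ht0; linarith [pow_pos ht0 3]
      have hs2c : t/2 - (t/2)^3/4 < Real.sin (t/2) :=
        by have := Real.sin_gt_sub_cube (x := t/2) (by linarith); linarith [pow_pos ht0 3]
      have hcube : Real.sin (t/2)^3 ≤ Real.sin (t/2) := by
        nlinarith [mul_nonneg (mul_nonneg hs2pos.le (sub_nonneg.2 hs2le))
          (by linarith : (0:ℝ) ≤ 1 + Real.sin (t/2))]
      have hF3pos : 0 < Real.sin (t/2) - Real.sin (t/2)^3/3 := by linarith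
      have hF2pos : 0 < t/4 - Real.sin t/4 := by linarith
      set r := (t/4 - Real.sin t/4) / (Real.sin (t/2) - Real.sin (t/2)^3/3) with hr_def
      have hr0 : 0 < r := div_pos hF2pos hF3pos
      have key : r * (Real.sin (t/2) - Real.sin (t/2)^3/3) = t/4 - Real.sin t/4 := by
        rw [hr_def]
        exact div_mul_cancel₀ _ (ne_of_gt hF3pos)
      have hr1 : r ≤ 1 := by
        rw [hr_def, div_le_one hF3pos]
        nlinarith [hstc, hs2c, hcube, ht0, ht1,
          mul_nonneg ht0.le (by linarith : (0:ℝ) ≤ 1/2 - t),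
          mul_nonneg (mul_nonneg ht0.le ht0.le) (by linarith : (0:ℝ) ≤ 1/2 - t)]
      have hc2pos : 0 < Real.cos (t/2) := Real.cos_pos_of_mem_Ioo ⟨by linarith, by linarith⟩
      have hc2le : Real.cos (t/2) ≤ 1 := Real.cos_le_one _
      refine ⟨![r * Real.cos (t/2), -(r * Real.sin (t/2)), 0, 0],
        ⟨(r * Real.cos (t/2), -(r * Real.sin (t/2))), ?_, by simp⟩, ?_, t, ht0, htδ,
        gam t r, ?_, fun s _ => trivial, fun s _ => (gam_hasDerivAt t r s).hasDerivWithinAt, ?_⟩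
      · -- the starting point lies in the compact set
        rw [Metric.mem_closedBall, dist_zero_right, Prod.norm_def]
        apply max_le
        · rw [Real.norm_eq_abs, abs_of_nonneg (mul_nonneg hr0.le hc2pos.le)]
          nlinarith [mul_le_mul hr1 hc2le hc2pos.le (by norm_num : (0:ℝ) ≤ 1)]
        · rw [Real.norm_eq_abs, abs_neg, abs_of_nonneg (mul_nonneg hr0.le hs2pos.le)]
          nlinarith [mul_le_mul hr1 hs2le hs2pos.le (by norm_num : (0:ℝ) ≤ 1)]
      · -- V does not vanish at the starting point
        intro h0
        have h1 := congrFun h0 1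
        simp [Vf] at h1
        rcases h1 with h | h
        · exact absurd h (ne_of_gt hr0)
        · exact absurd h (ne_of_gt hc2pos)
      · -- γ 0 = p
        exact gam_zero t r
      · -- γ t ∈ X
        exact ⟨(r * Real.cos (t/2), r * Real.sin (t/2)), trivial, (gam_end t r key).symm⟩

end
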